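/- For all x, y ∈ 𝓑, x ≈ y if and only if f(x) ≡ f(y), where f : 𝓑 → B_∞ is given by f(b, m) = f_m(b). -/

import Mathlib

/-!
Generators are 0-indexed: the generator of index `i` represents `σ_{i+1}`
of the braid group presentation.
-/

/-- Relators of the infinite braid group `B_∞`: generator `i : ℕ` represents `σ_{i+1}`. -/
def braidRelsInf : Set (FreeGroup ℕ) :=
  {r | (∃ i j : ℕ, i + 2 ≤ j ∧
          r = FreeGroup.of i * FreeGroup.of j * (FreeGroup.of i)⁻¹ * (FreeGroup.of j)⁻¹) ∨
       (∃ i : ℕ,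
          r = FreeGroup.of i * FreeGroup.of (i + 1) * FreeGroup.of i *
              (FreeGroup.of (i + 1))⁻¹ * (FreeGroup.of i)⁻¹ * (FreeGroup.of (i + 1))⁻¹)}

/-- The infinite braid group `B_∞`. -/
def BInf : Type := PresentedGroup braidRelsInf

instance : Group BInf := by unfold BInf; infer_instance

/-- `iσ i` is the generator `σ_{i+1}` of `B_∞` (0-indexed, so `iσ 0 = σ_1`). -/
def iσ (i : ℕ) : BInf := PresentedGroup.of i

/-- Relators of a braid group on generators indexed by `Fin m`;
the generator of index `i` represents `σ_{i+1}` (0-indexed). -/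
def braidRels (m : ℕ) : Set (FreeGroup (Fin m)) :=
  {r | (∃ i j : Fin m, (i : ℕ) + 2 ≤ (j : ℕ) ∧
          r = FreeGroup.of i * FreeGroup.of j * (FreeGroup.of i)⁻¹ * (FreeGroup.of j)⁻¹) ∨
       (∃ i j : Fin m, (j : ℕ) = (i : ℕ) + 1 ∧
          r = FreeGroup.of i * FreeGroup.of j * FreeGroup.of i *
              (FreeGroup.of j)⁻¹ * (FreeGroup.of i)⁻¹ * (FreeGroup.of j)⁻¹)}

/-- The braid group `B_n`, presented with generators `σ_1, …, σ_{n-1}`. -/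
def BraidGroup (n : ℕ) : Type := PresentedGroup (braidRels (n - 1))

instance (n : ℕ) : Group (BraidGroup n) := by unfold BraidGroup; infer_instance

/-- `bσ k` is the generator `σ_{k+1}` of `B_n` (0-indexed, so `bσ 0 = σ_1`). -/
def bσ {n : ℕ} (k : Fin (n - 1)) : BraidGroup n := PresentedGroup.of k

/-- The generating moves of the relation `≡` on `B_∞` (for the shift `T`):
`a·b·a⁻¹ ≡ b`, `b ≡ σ_1·T b`, and `b ≡ σ_1⁻¹·T b`. -/
def equivMove (T : BInf →* BInf) : BInf → BInf → Prop := fun x y =>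
  (∃ a : BInf, x = a * y * a⁻¹) ∨ y = iσ 0 * T x ∨ y = (iσ 0)⁻¹ * T x

/-- The set `𝓑` of pairs `(b, m)` with `m ≥ 2` and `b ∈ B_m`, encoded as
`⟨k, b⟩` with `b ∈ B_{k+2}`. -/
def BB : Type := (k : ℕ) × BraidGroup (k + 2)

/-- The generating moves of the relation `≈` on `𝓑` (for a compatible family
`ι` of inclusions `B_{k+2} → B_{l+2}`, `σ_j ↦ σ_j`): conjugation, the Markov
right-stabilizations `(b, m) ≈ (σ_m^{±1} · i_m b, m+1)`, and the inclusion
moves `(b, m₁) ≈ (i_{m₁} b, m₂)` for `m₁ ≤ m₂`. -/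
def approxMove
    (ι : ∀ (k l : ℕ), k ≤ l → (BraidGroup (k + 2) →* BraidGroup (l + 2))) :
    BB → BB → Prop := fun x y =>
  (∃ a : BraidGroup (x.1 + 2), y = ⟨x.1, a * x.2 * a⁻¹⟩) ∨
  y = ⟨x.1 + 1, bσ (⟨x.1 + 1, by omega⟩ : Fin (x.1 + 3 - 1)) *
        ι x.1 (x.1 + 1) (Nat.le_succ _) x.2⟩ ∨
  y = ⟨x.1 + 1, (bσ (⟨x.1 + 1, by omega⟩ : Fin (x.1 + 3 - 1)))⁻¹ *
        ι x.1 (x.1 + 1) (Nat.le_succ _) x.2⟩ ∨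
  (∃ h : x.1 ≤ y.1, y.2 = ι x.1 y.1 h x.2)

namespace BraidAux

lemma comm_of_rel {G : Type*} [Group G] {a b : G} (h : a * b * a⁻¹ * b⁻¹ = 1) :
    a * b = b * a := by
  have h2 : a * b * a⁻¹ = b := by rwa [mul_inv_eq_one] at h
  calc a * b = (a * b * a⁻¹) * a := by group
  _ = b * a := by rw [h2]

lemma braid_of_rel {G : Type*} [Group G] {a b : G}
    (h : a * b * a * b⁻¹ * a⁻¹ * b⁻¹ = 1) : a * b * a = b * a * b := by
  have h2 : a * b * a * b⁻¹ * a⁻¹ = b := by rwa [mul_inv_eq_one] at h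
  calc a * b * a = (a * b * a * b⁻¹ * a⁻¹) * a * b := by group
  _ = b * a * b := by rw [h2]

lemma rel_of_comm {G : Type*} [Group G] {a b : G} (h : a * b = b * a) :
    a * b * a⁻¹ * b⁻¹ = 1 := by rw [h]; group

lemma rel_of_braid {G : Type*} [Group G] {a b : G} (h : a * b * a = b * a * b) :
    a * b * a * b⁻¹ * a⁻¹ * b⁻¹ = 1 := by
  rw [show a * b * a * b⁻¹ * a⁻¹ * b⁻¹ = (a * b * a) * (b * a * b)⁻¹ by group, h]; group

lemma mk_rel_one {α} {rels : Set (FreeGroup α)} {r : FreeGroup α} (h : r ∈ rels) :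
    PresentedGroup.mk rels r = 1 :=
  (QuotientGroup.eq_one_iff r).2 (Subgroup.subset_normalClosure h)

lemma bσ_comm {n : ℕ} {i j : Fin (n-1)} (h : (i:ℕ) + 2 ≤ (j:ℕ)) :
    bσ i * bσ j = bσ j * bσ i := by
  apply comm_of_rel
  have h1 : PresentedGroup.mk (braidRels (n-1))
      (FreeGroup.of i * FreeGroup.of j * (FreeGroup.of i)⁻¹ * (FreeGroup.of j)⁻¹) = 1 :=
    mk_rel_one (Or.inl ⟨i, j, h, rfl⟩)
  simp only [map_mul, map_inv] at h1
  exact h1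

lemma bσ_braid {n : ℕ} {i j : Fin (n-1)} (h : (j:ℕ) = (i:ℕ) + 1) :
    bσ i * bσ j * bσ i = bσ j * bσ i * bσ j := by
  apply braid_of_rel
  have h1 : PresentedGroup.mk (braidRels (n-1))
      (FreeGroup.of i * FreeGroup.of j * FreeGroup.of i *
        (FreeGroup.of j)⁻¹ * (FreeGroup.of i)⁻¹ * (FreeGroup.of j)⁻¹) = 1 :=
    mk_rel_one (Or.inr ⟨i, j, h, rfl⟩)
  simp only [map_mul, map_inv] at h1
  exact h1


lemma g_comm {n : ℕ} {a b : ℕ} (ha : a < n-1) (hb : b < n-1) (h : a + 2 ≤ b) :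
    bσ (⟨a, ha⟩ : Fin (n-1)) * bσ ⟨b, hb⟩ = bσ ⟨b, hb⟩ * bσ ⟨a, ha⟩ :=
  bσ_comm h

lemma g_braid {n : ℕ} {a : ℕ} (ha : a < n-1) (ha1 : a + 1 < n-1) :
    bσ (⟨a, ha⟩ : Fin (n-1)) * bσ ⟨a+1, ha1⟩ * bσ ⟨a, ha⟩ =
      bσ ⟨a+1, ha1⟩ * bσ ⟨a, ha⟩ * bσ ⟨a+1, ha1⟩ :=
  bσ_braid rfl

/-- `dd n p _` is the product `σ_1 ⋯ σ_p` (0-indexed generators `bσ 0 ⋯ bσ (p-1)`). -/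
def dd (n : ℕ) : (p : ℕ) → p ≤ n - 1 → BraidGroup n
  | 0, _ => 1
  | p+1, h => dd n p (by omega) * bσ ⟨p, by omega⟩

lemma dd_succ {n : ℕ} (p : ℕ) (h : p + 1 ≤ n - 1) :
    dd n (p+1) h = dd n p (by omega) * bσ ⟨p, by omega⟩ := rfl

lemma dd_comm {n : ℕ} (p : ℕ) (hp : p ≤ n - 1) (j : ℕ) (hjn : j < n - 1)
    (hj : p + 1 ≤ j) :
    dd n p hp * bσ ⟨j, hjn⟩ = bσ ⟨j, hjn⟩ * dd n p hp := by
  induction p with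
  | zero => simp [dd]
  | succ q ih =>
    rw [dd_succ, mul_assoc, g_comm (by omega) hjn (by omega), ← mul_assoc,
      ih (by omega) (by omega), mul_assoc]

lemma dd_shift {n : ℕ} (p : ℕ) (hp : p ≤ n - 1) (i : ℕ) (hin : i < n - 1)
    (hi1 : i + 1 < n - 1) (hi : i + 2 ≤ p) :
    dd n p hp * bσ ⟨i, hin⟩ = bσ ⟨i+1, hi1⟩ * dd n p hp := by
  induction p with
  | zero => omega
  | succ q ih =>
    rcases Nat.lt_or_ge (i+2) (q+1) with hq | hq
    · -- i + 2 ≤ q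
      rw [dd_succ, mul_assoc, ← g_comm hin (by omega) (by omega), ← mul_assoc,
        ih (by omega) (by omega), mul_assoc]
    · -- q = i+1
      have hq3 : q = i + 1 := by omega
      subst hq3
      rw [dd_succ, dd_succ, mul_assoc, mul_assoc, mul_assoc]
      rw [show bσ (⟨i, by omega⟩ : Fin (n-1)) * (bσ ⟨i+1, by omega⟩ * bσ ⟨i, by omega⟩)
          = bσ ⟨i, by omega⟩ * bσ ⟨i+1, by omega⟩ * bσ ⟨i, by omega⟩ from
          (mul_assoc _ _ _).symm,
        g_braid (by omega) (by omega)]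
      rw [← mul_assoc (dd n i _), ← mul_assoc (dd n i _),
        dd_comm i (by omega) (i+1) (by omega) (by omega)]
      group

lemma dd_key {n : ℕ} (p : ℕ) (hp0 : 1 ≤ p) (hp : p + 1 ≤ n - 1) (h0 : 0 < n - 1)
    (hpn : p < n - 1) :
    bσ (⟨0, h0⟩ : Fin (n-1)) * dd n (p+1) hp * dd n p (by omega) =
      dd n (p+1) hp * dd n p (by omega) * bσ ⟨p, hpn⟩ := by
  induction p with
  | zero => omega
  | succ q ih =>
    rcases Nat.eq_or_lt_of_le hp0 with h1 | h1
    · -- q = 0 : base:  g0 * (g0 g1) * g0 = (g0 g1) g0 g1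
      have hq : q = 0 := by omega
      subst hq
      simp only [dd, one_mul]
      calc bσ ⟨0,h0⟩ * (bσ ⟨0,h0⟩ * bσ ⟨0+1,hpn⟩) * bσ ⟨0,h0⟩
          = bσ ⟨0,h0⟩ * (bσ ⟨0,h0⟩ * bσ ⟨0+1,hpn⟩ * bσ ⟨0,h0⟩) := by group
        _ = bσ ⟨0,h0⟩ * (bσ ⟨0+1,hpn⟩ * bσ ⟨0,h0⟩ * bσ ⟨0+1,hpn⟩) := by
            rw [g_braid h0 hpn]
        _ = bσ ⟨0,h0⟩ * bσ ⟨0+1,hpn⟩ * bσ ⟨0,h0⟩ * bσ ⟨0+1,hpn⟩ := by group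
    · -- inductive step, q ≥ 1
      have hq1 : 1 ≤ q := by omega
      have hcomm : dd n q (by omega) * bσ (⟨q+1, by omega⟩ : Fin (n-1)) =
          bσ ⟨q+1, by omega⟩ * dd n q (by omega) :=
        dd_comm q (by omega) (q+1) (by omega) (by omega)
      have hbr := g_braid (n := n) (a := q) (by omega) (by omega)
      have ihq := ih hq1 (by omega) (by omega)
      calc bσ ⟨0, h0⟩ * dd n (q+2) hp * dd n (q+1) (by omega)
          = bσ ⟨0, h0⟩ * dd n (q+1) (by omega) *
              (bσ ⟨q+1, by omega⟩ * dd n q (by omega)) * bσ ⟨q, by omega⟩ := by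
            rw [dd_succ (q+1), dd_succ q]; group
        _ = bσ ⟨0, h0⟩ * dd n (q+1) (by omega) *
              (dd n q (by omega) * bσ ⟨q+1, by omega⟩) * bσ ⟨q, by omega⟩ := by
            rw [← hcomm]
        _ = bσ ⟨0, h0⟩ * dd n (q+1) (by omega) * dd n q (by omega) *
              (bσ ⟨q+1, by omega⟩ * bσ ⟨q, by omega⟩) := by group
        _ = dd n (q+1) (by omega) * dd n q (by omega) * bσ ⟨q, by omega⟩ *
              (bσ ⟨q+1, by omega⟩ * bσ ⟨q, by omega⟩) := by rw [ihq]
        _ = dd n (q+1) (by omega) * dd n q (by omega) *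
              (bσ ⟨q, by omega⟩ * bσ ⟨q+1, by omega⟩ * bσ ⟨q, by omega⟩) := by group
        _ = dd n (q+1) (by omega) * dd n q (by omega) *
              (bσ ⟨q+1, by omega⟩ * bσ ⟨q, by omega⟩ * bσ ⟨q+1, by omega⟩) := by rw [hbr]
        _ = dd n (q+1) (by omega) * (dd n q (by omega) * bσ ⟨q+1, by omega⟩) *
              (bσ ⟨q, by omega⟩ * bσ ⟨q+1, by omega⟩) := by group
        _ = dd n (q+1) (by omega) * (bσ ⟨q+1, by omega⟩ * dd n q (by omega)) *
              (bσ ⟨q, by omega⟩ * bσ ⟨q+1, by omega⟩) := by rw [hcomm]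
        _ = dd n (q+2) hp * dd n (q+1) (by omega) * bσ ⟨q+1, hpn⟩ := by
            rw [dd_succ (q+1), dd_succ q]; group

end BraidAux
namespace BraidAux

set_option linter.unusedSectionVars false

lemma of_eq_bσ {n : ℕ} (j : Fin (n-1)) :
    (PresentedGroup.of j : PresentedGroup (braidRels (n-1))) = bσ j := rfl

lemma castLE_eq_mk {n m : ℕ} (h : n ≤ m) (j : Fin n) :
    Fin.castLE h j = (⟨(j : ℕ), by omega⟩ : Fin m) := rfl

/-- Shift homomorphism `B_{k+2} → B_{k+3}`, `σ_j ↦ σ_{j+1}`. -/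
def shMap (k : ℕ) : BraidGroup (k+2) →* BraidGroup (k+3) :=
  PresentedGroup.toGroup
    (f := fun j : Fin (k+1) => bσ (⟨(j:ℕ)+1, by omega⟩ : Fin (k+2))) <| by
    intro r hr
    rcases hr with ⟨i, j, hij, rfl⟩ | ⟨i, j, hij, rfl⟩
    · simp only [map_mul, map_inv, FreeGroup.lift_apply_of]
      exact rel_of_comm (g_comm _ _ (by omega))
    · simp only [map_mul, map_inv, FreeGroup.lift_apply_of]
      refine rel_of_braid ?_
      have : ((j:ℕ)+1) = ((i:ℕ)+1)+1 := by omega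
      exact bσ_braid (by simpa using this)

lemma shMap_of (k : ℕ) (j : Fin (k+1)) :
    shMap k (bσ j) = bσ (⟨(j:ℕ)+1, by omega⟩ : Fin (k+2)) :=
  PresentedGroup.toGroup.of _

lemma shMap_of' (k : ℕ) (j : Fin (k+2-1)) :
    shMap k (bσ j) = bσ (⟨(j:ℕ)+1, by omega⟩ : Fin (k+3-1)) :=
  PresentedGroup.toGroup.of _

lemma bhom_ext {n : ℕ} {G : Type*} [Group G] {φ ψ : BraidGroup n →* G}
    (h : ∀ j : Fin (n-1), φ (bσ j) = ψ (bσ j)) : ∀ b, φ b = ψ b := by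
  have he : φ = ψ := PresentedGroup.ext h
  intro b; rw [he]

section Homs

variable (T : BInf →* BInf)
    (hT : ∀ i : ℕ, T (iσ i) = iσ (i + 1))
    (ι : ∀ (k l : ℕ), k ≤ l → (BraidGroup (k + 2) →* BraidGroup (l + 2)))
    (hι : ∀ (k l : ℕ) (h : k ≤ l) (j : Fin (k + 1)),
      ι k l h (bσ j) = bσ (Fin.castLE (Nat.le_pred_of_lt (Nat.succ_lt_succ (Nat.lt_succ_of_le h))) j : Fin (l + 2 - 1)))
    (f : ∀ k : ℕ, BraidGroup (k + 2) →* BInf)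
    (hf : ∀ (k : ℕ) (j : Fin (k + 1)), f k (bσ j) = iσ (j : ℕ))

include hι in
lemma hι' (k l : ℕ) (h : k ≤ l) (j : Fin (k + 2 - 1)) :
    ι k l h (bσ j) = bσ (⟨(j:ℕ), by omega⟩ : Fin (l + 2 - 1)) := by
  have h2 := hι k l h j
  rwa [castLE_eq_mk] at h2

include hf in
lemma hf' (k : ℕ) (j : Fin (k + 2 - 1)) : f k (bσ j) = iσ (j : ℕ) := hf k j

include hι hf in
lemma f_ι (k l : ℕ) (h : k ≤ l) (b : BraidGroup (k+2)) : f l (ι k l h b) = f k b := by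
  refine bhom_ext (φ := (f l).comp (ι k l h)) (ψ := f k) (fun j => ?_) b
  rw [MonoidHom.comp_apply, hι' ι hι, hf' f hf, hf' f hf]

include hT hf in
lemma T_f (k : ℕ) (b : BraidGroup (k+2)) : T (f k b) = f (k+1) (shMap k b) := by
  refine bhom_ext (φ := T.comp (f k)) (ψ := (f (k+1)).comp (shMap k)) (fun j => ?_) b
  rw [MonoidHom.comp_apply, MonoidHom.comp_apply, hf' f hf k j, hT, shMap_of',
    hf' f hf (k+1)]

/-- `σ_1 ⋯ σ_{k+2}`, the full twist generator conjugating `ι` to `shMap`. -/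
def cC (k : ℕ) : BraidGroup (k+3) := dd (k+3) (k+2) (by omega)

/-- `σ_1 ⋯ σ_{k+1}` inside `B_{k+3}`. -/
def dD (k : ℕ) : BraidGroup (k+3) := dd (k+3) (k+1) (by omega)

/-- `σ_1 ⋯ σ_{k+1}` inside `B_{k+2}`. -/
def d0 (k : ℕ) : BraidGroup (k+2) := dd (k+2) (k+1) (by omega)

include hι in
lemma ι_dd (k l : ℕ) (h : k ≤ l) (p : ℕ) (hp : p ≤ k+1) (hp' : p ≤ l+1) :
    ι k l h (dd (k+2) p (by omega)) = dd (l+2) p (by omega) := by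
  induction p with
  | zero => simp [dd]
  | succ q ihq =>
    rw [dd_succ, dd_succ, map_mul, ihq (by omega) (by omega), hι, castLE_eq_mk]

include hι in
lemma sh_conj (k : ℕ) (b : BraidGroup (k+2)) :
    shMap k b = cC k * ι k (k+1) (Nat.le_succ k) b * (cC k)⁻¹ := by
  refine bhom_ext (φ := shMap k)
    (ψ := ((MulAut.conj (cC k)).toMonoidHom).comp (ι k (k+1) (Nat.le_succ k)))
    (fun j => ?_) b
  rw [shMap_of', MonoidHom.comp_apply, hι' ι hι]
  show bσ _ = cC k * bσ _ * (cC k)⁻¹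
  have hs := dd_shift (n := k+3) (k+2) (by omega) (j:ℕ) (by omega) (by omega) (by omega)
  unfold cC
  rw [show dd (k+3) (k+2) (by omega) * bσ (⟨(j:ℕ), by omega⟩ : Fin (k+1+2-1)) *
      (dd (k+3) (k+2) (by omega))⁻¹ =
      (dd (k+3) (k+2) (by omega) * bσ (⟨(j:ℕ), by omega⟩ : Fin (k+3-1))) *
      (dd (k+3) (k+2) (by omega))⁻¹ from rfl, hs]
  group

include hι in
lemma key_eq1 (k : ℕ) :
    bσ (⟨0, by omega⟩ : Fin (k+3-1)) * (cC k * dD k) =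
      (cC k * dD k) * bσ (⟨k+1, by omega⟩ : Fin (k+3-1)) := by
  have := dd_key (n := k+3) (k+1) (by omega) (by omega) (by omega) (by omega)
  unfold cC dD
  rw [← mul_assoc]
  exact this

include hι in
lemma key_eq1' (k : ℕ) :
    bσ (⟨0, by omega⟩ : Fin (k+3-1)) =
      (cC k * dD k) * bσ (⟨k+1, by omega⟩ : Fin (k+3-1)) * (cC k * dD k)⁻¹ := by
  rw [← key_eq1 ι hι k]; group

include hι in
lemma key_eq2 (k : ℕ) (b : BraidGroup (k+2)) :
    ι k (k+1) (Nat.le_succ k) ((d0 k)⁻¹ * b * d0 k) =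
      (dD k)⁻¹ * ι k (k+1) (Nat.le_succ k) b * dD k := by
  have hd : ι k (k+1) (Nat.le_succ k) (d0 k) = dD k := by
    unfold d0 dD
    exact ι_dd ι hι k (k+1) (Nat.le_succ k) (k+1) (by omega) (by omega)
  rw [map_mul, map_mul, map_inv, hd]

include hι in
lemma key_pos (k : ℕ) (b : BraidGroup (k+2)) :
    bσ (⟨0, by omega⟩ : Fin (k+3-1)) * shMap k b =
      (cC k * dD k) * (bσ (⟨k+1, by omega⟩ : Fin (k+3-1)) *
        ι k (k+1) (Nat.le_succ k) ((d0 k)⁻¹ * b * d0 k)) * (cC k * dD k)⁻¹ := by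
  rw [sh_conj ι hι k b, key_eq2 ι hι k b, key_eq1' ι hι k]
  group

include hι in
lemma key_neg (k : ℕ) (b : BraidGroup (k+2)) :
    (bσ (⟨0, by omega⟩ : Fin (k+3-1)))⁻¹ * shMap k b =
      (cC k * dD k) * ((bσ (⟨k+1, by omega⟩ : Fin (k+3-1)))⁻¹ *
        ι k (k+1) (Nat.le_succ k) ((d0 k)⁻¹ * b * d0 k)) * (cC k * dD k)⁻¹ := by
  rw [sh_conj ι hι k b, key_eq2 ι hι k b, key_eq1' ι hι k]
  group

end Homs

end BraidAux
namespace BraidAux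

set_option linter.unusedSectionVars false

/-- canonical projection onto `BraidGroup n`. -/
def bmk (n : ℕ) : FreeGroup (Fin (n-1)) →* BraidGroup n := PresentedGroup.mk _

/-- canonical projection onto `BInf`. -/
def imk : FreeGroup ℕ →* BInf := PresentedGroup.mk _

lemma bmk_surj (n : ℕ) : Function.Surjective (bmk n) :=
  PresentedGroup.mk_surjective _

lemma bmk_of {n : ℕ} (j : Fin (n-1)) : bmk n (FreeGroup.of j) = bσ j := rfl

lemma imk_of (i : ℕ) : imk (FreeGroup.of i) = iσ i := rfl

/-- index-cast function. -/
def castFun (k l : ℕ) (h : k ≤ l) : Fin (k+2-1) → Fin (l+2-1) :=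
  fun j => ⟨(j:ℕ), by omega⟩

/-- retraction of the free group on `ℕ` onto the free group on `Fin N`. -/
def ρ (N : ℕ) : FreeGroup ℕ →* FreeGroup (Fin N) :=
  FreeGroup.lift (fun i => if h : i < N then FreeGroup.of ⟨i, h⟩ else 1)

lemma ρ_of_lt {N i : ℕ} (h : i < N) : ρ N (FreeGroup.of i) = FreeGroup.of ⟨i, h⟩ := by
  rw [ρ, FreeGroup.lift_apply_of, dif_pos h]

section Homs2

variable (T : BInf →* BInf)
    (hT : ∀ i : ℕ, T (iσ i) = iσ (i + 1))
    (ι : ∀ (k l : ℕ), k ≤ l → (BraidGroup (k + 2) →* BraidGroup (l + 2)))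
    (hι : ∀ (k l : ℕ) (h : k ≤ l) (j : Fin (k + 1)),
      ι k l h (bσ j) = bσ (Fin.castLE (Nat.le_pred_of_lt (Nat.succ_lt_succ (Nat.lt_succ_of_le h))) j : Fin (l + 2 - 1)))
    (f : ∀ k : ℕ, BraidGroup (k + 2) →* BInf)
    (hf : ∀ (k : ℕ) (j : Fin (k + 1)), f k (bσ j) = iσ (j : ℕ))

include hι in
lemma ι_bmk (k l : ℕ) (h : k ≤ l) (w : FreeGroup (Fin (k+2-1))) :
    ι k l h (bmk (k+2) w) = bmk (l+2) (FreeGroup.map (castFun k l h) w) := by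
  have he : (ι k l h).comp (bmk (k+2)) = (bmk (l+2)).comp (FreeGroup.map (castFun k l h)) :=
    FreeGroup.ext_hom _ _ (fun j => by
      rw [MonoidHom.comp_apply, MonoidHom.comp_apply, FreeGroup.map.of, bmk_of, bmk_of,
        hι' ι hι]
      rfl)
  exact DFunLike.congr_fun he w

include hf in
lemma f_bmk (k : ℕ) (w : FreeGroup (Fin (k+2-1))) :
    f k (bmk (k+2) w) = imk (FreeGroup.map (fun j : Fin (k+2-1) => (j:ℕ)) w) := by
  have he : (f k).comp (bmk (k+2)) = imk.comp (FreeGroup.map (fun j : Fin (k+2-1) => (j:ℕ))) :=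
    FreeGroup.ext_hom _ _ (fun j => by
      rw [MonoidHom.comp_apply, MonoidHom.comp_apply, FreeGroup.map.of, bmk_of, imk_of,
        hf' f hf])
  exact DFunLike.congr_fun he w

lemma ρ_map (k N : ℕ) (hN : k + 2 - 1 ≤ N) (w : FreeGroup (Fin (k+2-1))) :
    ρ N (FreeGroup.map (fun j : Fin (k+2-1) => (j:ℕ)) w) =
      FreeGroup.map (fun j : Fin (k+2-1) => (⟨(j:ℕ), by omega⟩ : Fin N)) w := by
  have he : (ρ N).comp (FreeGroup.map (fun j : Fin (k+2-1) => (j:ℕ))) =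
      FreeGroup.map (fun j : Fin (k+2-1) => (⟨(j:ℕ), by omega⟩ : Fin N)) :=
    FreeGroup.ext_hom _ _ (fun j => by
      rw [MonoidHom.comp_apply, FreeGroup.map.of, FreeGroup.map.of, ρ_of_lt (by omega)])
  exact DFunLike.congr_fun he w

end Homs2

lemma nc_bound (g : FreeGroup ℕ) (hg : g ∈ Subgroup.normalClosure braidRelsInf) :
    ∃ N : ℕ, ∀ M : ℕ, N ≤ M → ρ M g ∈ Subgroup.normalClosure (braidRels M) := by
  have hg' : g ∈ Subgroup.closure (Group.conjugatesOfSet braidRelsInf) := hg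
  refine Subgroup.closure_induction ?_ ?_ ?_ ?_ hg'
  · intro y hy
    rw [Group.mem_conjugatesOfSet_iff] at hy
    obtain ⟨r, hr, hconj⟩ := hy
    obtain ⟨c, hc⟩ := isConj_iff.1 hconj
    rcases hr with ⟨i, j, hij, rfl⟩ | ⟨i, rfl⟩
    · refine ⟨j+1, fun M hM => ?_⟩
      rw [← hc]
      simp only [map_mul, map_inv]
      rw [ρ_of_lt (show i < M by omega), ρ_of_lt (show j < M by omega)]
      refine Subgroup.normalClosure_normal.conj_mem _ (Subgroup.subset_normalClosure ?_) _
      exact Or.inl ⟨⟨i, by omega⟩, ⟨j, by omega⟩, by simpa using hij, rfl⟩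
    · refine ⟨i+2, fun M hM => ?_⟩
      rw [← hc]
      simp only [map_mul, map_inv]
      rw [ρ_of_lt (show i < M by omega), ρ_of_lt (show i+1 < M by omega)]
      refine Subgroup.normalClosure_normal.conj_mem _ (Subgroup.subset_normalClosure ?_) _
      exact Or.inr ⟨⟨i, by omega⟩, ⟨i+1, by omega⟩, by simp, rfl⟩
  · exact ⟨0, fun M _ => by simpa using Subgroup.one_mem _⟩
  · rintro x y - - ⟨N1, h1⟩ ⟨N2, h2⟩
    exact ⟨max N1 N2, fun M hM => by
      rw [map_mul]
      exact Subgroup.mul_mem _ (h1 M (by omega)) (h2 M (by omega))⟩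
  · rintro x - ⟨N1, h1⟩
    exact ⟨N1, fun M hM => by
      rw [map_inv]
      exact Subgroup.inv_mem _ (h1 M hM)⟩

end BraidAux
namespace BraidAux

set_option linter.unusedSectionVars false

section Homs3

variable (T : BInf →* BInf)
    (hT : ∀ i : ℕ, T (iσ i) = iσ (i + 1))
    (ι : ∀ (k l : ℕ), k ≤ l → (BraidGroup (k + 2) →* BraidGroup (l + 2)))
    (hι : ∀ (k l : ℕ) (h : k ≤ l) (j : Fin (k + 1)),
      ι k l h (bσ j) = bσ (Fin.castLE (Nat.le_pred_of_lt (Nat.succ_lt_succ (Nat.lt_succ_of_le h))) j : Fin (l + 2 - 1)))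
    (f : ∀ k : ℕ, BraidGroup (k + 2) →* BInf)
    (hf : ∀ (k : ℕ) (j : Fin (k + 1)), f k (bσ j) = iσ (j : ℕ))

include hι hf in
lemma stage_eq (k k' : ℕ) (b : BraidGroup (k+2)) (b' : BraidGroup (k'+2))
    (heq : f k b = f k' b') :
    ∃ (l : ℕ) (h : k ≤ l) (h' : k' ≤ l), ι k l h b = ι k' l h' b' := by
  obtain ⟨w, rfl⟩ := bmk_surj (k+2) b
  obtain ⟨w', rfl⟩ := bmk_surj (k'+2) b'
  rw [f_bmk f hf, f_bmk f hf] at heq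
  set u : FreeGroup ℕ := FreeGroup.map (fun j : Fin (k+2-1) => (j:ℕ)) w with hu
  set u' : FreeGroup ℕ := FreeGroup.map (fun j : Fin (k'+2-1) => (j:ℕ)) w' with hu'
  have hq : (u : FreeGroup ℕ ⧸ Subgroup.normalClosure braidRelsInf) = u' := heq
  have hmem : u⁻¹ * u' ∈ Subgroup.normalClosure braidRelsInf := QuotientGroup.eq.1 hq
  obtain ⟨N, hN⟩ := nc_bound _ hmem
  refine ⟨max N (max k k'), by omega, by omega, ?_⟩
  set l := max N (max k k') with hl
  have hmem2 := hN (l+1) (by omega)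
  rw [map_mul, map_inv, ρ_map k (l+1) (by omega), ρ_map k' (l+1) (by omega)] at hmem2
  have hq2 : ((FreeGroup.map (fun j : Fin (k+2-1) => (⟨(j:ℕ), by omega⟩ : Fin (l+1))) w :
        FreeGroup (Fin (l+1))) :
        FreeGroup (Fin (l+1)) ⧸ Subgroup.normalClosure (braidRels (l+1))) =
      (FreeGroup.map (fun j : Fin (k'+2-1) => (⟨(j:ℕ), by omega⟩ : Fin (l+1))) w' :
        FreeGroup (Fin (l+1))) := QuotientGroup.eq.2 hmem2
  rw [ι_bmk ι hι k l (by omega), ι_bmk ι hι k' l (by omega)]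
  exact hq2

include hι hf in
lemma f_surj (u : BInf) : ∃ (k : ℕ) (b : BraidGroup (k+2)), f k b = u := by
  obtain ⟨w, rfl⟩ : ∃ w, imk w = u := PresentedGroup.mk_surjective _ u
  induction w using FreeGroup.induction_on with
  | C1 => exact ⟨0, 1, by simp⟩
  | of i => exact ⟨i, bσ ⟨i, by omega⟩, by rw [hf' f hf]; rfl⟩
  | inv_of i _ =>
    obtain ⟨k, b, hb⟩ : ∃ (k : ℕ) (b : BraidGroup (k+2)), f k b = imk (FreeGroup.of i) :=
      ⟨i, bσ ⟨i, by omega⟩, by rw [hf' f hf]; rfl⟩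
    exact ⟨k, b⁻¹, by rw [map_inv, hb]; rfl⟩
  | mul x y hx hy =>
    obtain ⟨k1, b1, h1⟩ := hx
    obtain ⟨k2, b2, h2⟩ := hy
    refine ⟨max k1 k2, ι k1 (max k1 k2) (by omega) b1 * ι k2 (max k1 k2) (by omega) b2, ?_⟩
    rw [map_mul, f_ι ι hι f hf, f_ι ι hι f hf, h1, h2, map_mul]

end Homs3

end BraidAux
namespace BraidAux

set_option linter.unusedSectionVars false
set_option maxHeartbeats 1000000

section Rel

variable (T : BInf →* BInf)
    (hT : ∀ i : ℕ, T (iσ i) = iσ (i + 1))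
    (ι : ∀ (k l : ℕ), k ≤ l → (BraidGroup (k + 2) →* BraidGroup (l + 2)))
    (hι : ∀ (k l : ℕ) (h : k ≤ l) (j : Fin (k + 1)),
      ι k l h (bσ j) = bσ (Fin.castLE (Nat.le_pred_of_lt (Nat.succ_lt_succ (Nat.lt_succ_of_le h))) j : Fin (l + 2 - 1)))
    (f : ∀ k : ℕ, BraidGroup (k + 2) →* BInf)
    (hf : ∀ (k : ℕ) (j : Fin (k + 1)), f k (bσ j) = iσ (j : ℕ))

-- basic approx moves
include ι in
lemma aconj (k : ℕ) (a c : BraidGroup (k+2)) :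
    Relation.EqvGen (approxMove ι) ⟨k, c⟩ ⟨k, a * c * a⁻¹⟩ :=
  Relation.EqvGen.rel _ _ (Or.inl ⟨a, rfl⟩)

include ι in
lemma aincl (x : BB) (l : ℕ) (h : x.1 ≤ l) :
    Relation.EqvGen (approxMove ι) x ⟨l, ι x.1 l h x.2⟩ :=
  Relation.EqvGen.rel _ _ (Or.inr (Or.inr (Or.inr ⟨h, rfl⟩)))

include ι in
lemma astabp (k : ℕ) (b : BraidGroup (k+2)) :
    Relation.EqvGen (approxMove ι)
      ⟨k, b⟩ ⟨k+1, bσ (⟨k+1, by omega⟩ : Fin (k+3-1)) * ι k (k+1) (Nat.le_succ _) b⟩ :=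
  Relation.EqvGen.rel _ _ (Or.inr (Or.inl rfl))

include ι in
lemma astabn (k : ℕ) (b : BraidGroup (k+2)) :
    Relation.EqvGen (approxMove ι)
      ⟨k, b⟩ ⟨k+1, (bσ (⟨k+1, by omega⟩ : Fin (k+3-1)))⁻¹ * ι k (k+1) (Nat.le_succ _) b⟩ :=
  Relation.EqvGen.rel _ _ (Or.inr (Or.inr (Or.inl rfl)))

include hι hf in
lemma afeq (x y : BB) (heq : f x.1 x.2 = f y.1 y.2) :
    Relation.EqvGen (approxMove ι) x y := by
  obtain ⟨l, h, h', he⟩ := stage_eq ι hι f hf x.1 y.1 x.2 y.2 heq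
  refine Relation.EqvGen.trans _ ⟨l, ι x.1 l h x.2⟩ _ (aincl ι x l h) ?_
  rw [he]
  exact Relation.EqvGen.symm _ _ (aincl ι y l h')

-- basic equiv moves
include T in
lemma econj (a u : BInf) : Relation.EqvGen (equivMove T) (a * u * a⁻¹) u :=
  Relation.EqvGen.rel _ _ (Or.inl ⟨a, rfl⟩)

include T in
lemma econj' (a u : BInf) : Relation.EqvGen (equivMove T) u (a * u * a⁻¹) :=
  Relation.EqvGen.symm _ _ (econj T a u)

lemma estep (u : BInf) : Relation.EqvGen (equivMove T) u (iσ 0 * T u) :=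
  Relation.EqvGen.rel _ _ (Or.inr (Or.inl rfl))

lemma estepn (u : BInf) : Relation.EqvGen (equivMove T) u ((iσ 0)⁻¹ * T u) :=
  Relation.EqvGen.rel _ _ (Or.inr (Or.inr rfl))

include hT hf in
lemma iσT (k : ℕ) (b : BraidGroup (k+2)) :
    iσ 0 * T (f k b) = f (k+1) (bσ (⟨0, by omega⟩ : Fin (k+3-1)) * shMap k b) := by
  rw [T_f T hT f hf k b, map_mul, hf' f hf (k+1) ⟨0, by omega⟩]

include hT hf in
lemma iσTn (k : ℕ) (b : BraidGroup (k+2)) :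
    (iσ 0)⁻¹ * T (f k b) =
      f (k+1) ((bσ (⟨0, by omega⟩ : Fin (k+3-1)))⁻¹ * shMap k b) := by
  rw [T_f T hT f hf k b, map_mul, map_inv, hf' f hf (k+1) ⟨0, by omega⟩]

-- the two Markov-stabilization equivalences at the level of `≡`
include hT hι hf in
lemma stab_equiv_pos (k : ℕ) (b : BraidGroup (k+2)) :
    Relation.EqvGen (equivMove T)
      (f k b) (f (k+1) (bσ (⟨k+1, by omega⟩ : Fin (k+3-1)) * ι k (k+1) (Nat.le_succ _) b)) := by
  set b' : BraidGroup (k+2) := d0 k * b * (d0 k)⁻¹ with hb'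
  have h1 : Relation.EqvGen (equivMove T) (f k b) (f k b') := by
    rw [hb', map_mul, map_mul, map_inv]
    exact econj' T (f k (d0 k)) (f k b)
  have h2 : Relation.EqvGen (equivMove T) (f k b') (iσ 0 * T (f k b')) := estep T _
  have h3 : iσ 0 * T (f k b') =
      f (k+1) ((cC k * dD k) * (bσ (⟨k+1, by omega⟩ : Fin (k+3-1)) *
        ι k (k+1) (Nat.le_succ k) b) * (cC k * dD k)⁻¹) := by
    rw [iσT T hT f hf k b']
    congr 1
    rw [key_pos ι hι k b']
    congr 3
    rw [hb']
    group
  have h4 : Relation.EqvGen (equivMove T)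
      (f (k+1) ((cC k * dD k) * (bσ (⟨k+1, by omega⟩ : Fin (k+3-1)) *
        ι k (k+1) (Nat.le_succ k) b) * (cC k * dD k)⁻¹))
      (f (k+1) (bσ (⟨k+1, by omega⟩ : Fin (k+3-1)) * ι k (k+1) (Nat.le_succ _) b)) := by
    rw [map_mul, map_mul, map_inv]
    exact econj T _ _
  exact Relation.EqvGen.trans _ _ _ h1
    (Relation.EqvGen.trans _ _ _ h2 (h3 ▸ h4))

include hT hι hf in
lemma stab_equiv_neg (k : ℕ) (b : BraidGroup (k+2)) :
    Relation.EqvGen (equivMove T)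
      (f k b)
      (f (k+1) ((bσ (⟨k+1, by omega⟩ : Fin (k+3-1)))⁻¹ * ι k (k+1) (Nat.le_succ _) b)) := by
  set b' : BraidGroup (k+2) := d0 k * b * (d0 k)⁻¹ with hb'
  have h1 : Relation.EqvGen (equivMove T) (f k b) (f k b') := by
    rw [hb', map_mul, map_mul, map_inv]
    exact econj' T (f k (d0 k)) (f k b)
  have h2 : Relation.EqvGen (equivMove T) (f k b') ((iσ 0)⁻¹ * T (f k b')) := estepn T _
  have h3 : (iσ 0)⁻¹ * T (f k b') =
      f (k+1) ((cC k * dD k) * ((bσ (⟨k+1, by omega⟩ : Fin (k+3-1)))⁻¹ *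
        ι k (k+1) (Nat.le_succ k) b) * (cC k * dD k)⁻¹) := by
    rw [iσTn T hT f hf k b']
    congr 1
    rw [key_neg ι hι k b']
    congr 3
    rw [hb']
    group
  have h4 : Relation.EqvGen (equivMove T)
      (f (k+1) ((cC k * dD k) * ((bσ (⟨k+1, by omega⟩ : Fin (k+3-1)))⁻¹ *
        ι k (k+1) (Nat.le_succ k) b) * (cC k * dD k)⁻¹))
      (f (k+1) ((bσ (⟨k+1, by omega⟩ : Fin (k+3-1)))⁻¹ * ι k (k+1) (Nat.le_succ _) b)) := by
    rw [map_mul, map_mul, map_inv]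
    exact econj T _ _
  exact Relation.EqvGen.trans _ _ _ h1
    (Relation.EqvGen.trans _ _ _ h2 (h3 ▸ h4))

-- backward stabilization at the level of `≈`
include hι hf in
lemma back_stab_pos (k : ℕ) (b : BraidGroup (k+2)) :
    Relation.EqvGen (approxMove ι)
      ⟨k+1, (bσ (⟨0, by omega⟩ : Fin (k+3-1)) * shMap k b : BraidGroup (k+3))⟩ ⟨k, b⟩ := by
  have hz : (⟨k+1, (bσ (⟨0, by omega⟩ : Fin (k+3-1)) * shMap k b : BraidGroup (k+3))⟩ : BB) =
      ⟨k+1, ((cC k * dD k) * (bσ (⟨k+1, by omega⟩ : Fin (k+3-1)) *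
        ι k (k+1) (Nat.le_succ k) ((d0 k)⁻¹ * b * d0 k)) * (cC k * dD k)⁻¹ :
          BraidGroup (k+3))⟩ :=
    congrArg (fun t : BraidGroup (k+3) => (⟨k+1, t⟩ : BB)) (key_pos ι hι k b)
  rw [hz]
  refine Relation.EqvGen.trans _
    (⟨k+1, (bσ (⟨k+1, by omega⟩ : Fin (k+3-1)) *
      ι k (k+1) (Nat.le_succ k) ((d0 k)⁻¹ * b * d0 k) : BraidGroup (k+3))⟩ : BB) _
    (Relation.EqvGen.symm _ _ (aconj ι (k+1) (cC k * dD k) _)) ?_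
  refine Relation.EqvGen.trans _ (⟨k, (d0 k)⁻¹ * b * d0 k⟩ : BB) _
    (Relation.EqvGen.symm _ _ (astabp ι k ((d0 k)⁻¹ * b * d0 k))) ?_
  have hb : d0 k * ((d0 k)⁻¹ * b * d0 k) * (d0 k)⁻¹ = b := by group
  have := aconj ι k (d0 k) ((d0 k)⁻¹ * b * d0 k)
  rwa [hb] at this

include hι hf in
lemma back_stab_neg (k : ℕ) (b : BraidGroup (k+2)) :
    Relation.EqvGen (approxMove ι)
      ⟨k+1, ((bσ (⟨0, by omega⟩ : Fin (k+3-1)))⁻¹ * shMap k b : BraidGroup (k+3))⟩ ⟨k, b⟩ := by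
  have hz : (⟨k+1, ((bσ (⟨0, by omega⟩ : Fin (k+3-1)))⁻¹ * shMap k b : BraidGroup (k+3))⟩ : BB) =
      ⟨k+1, ((cC k * dD k) * ((bσ (⟨k+1, by omega⟩ : Fin (k+3-1)))⁻¹ *
        ι k (k+1) (Nat.le_succ k) ((d0 k)⁻¹ * b * d0 k)) * (cC k * dD k)⁻¹ :
          BraidGroup (k+3))⟩ :=
    congrArg (fun t : BraidGroup (k+3) => (⟨k+1, t⟩ : BB)) (key_neg ι hι k b)
  rw [hz]
  refine Relation.EqvGen.trans _
    (⟨k+1, ((bσ (⟨k+1, by omega⟩ : Fin (k+3-1)))⁻¹ *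
      ι k (k+1) (Nat.le_succ k) ((d0 k)⁻¹ * b * d0 k) : BraidGroup (k+3))⟩ : BB) _
    (Relation.EqvGen.symm _ _ (aconj ι (k+1) (cC k * dD k) _)) ?_
  refine Relation.EqvGen.trans _ (⟨k, (d0 k)⁻¹ * b * d0 k⟩ : BB) _
    (Relation.EqvGen.symm _ _ (astabn ι k ((d0 k)⁻¹ * b * d0 k))) ?_
  have hb : d0 k * ((d0 k)⁻¹ * b * d0 k) * (d0 k)⁻¹ = b := by group
  have := aconj ι k (d0 k) ((d0 k)⁻¹ * b * d0 k)
  rwa [hb] at this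

end Rel

end BraidAux
namespace BraidAux

set_option linter.unusedSectionVars false
set_option maxHeartbeats 1000000

section Final

variable (T : BInf →* BInf)
    (hT : ∀ i : ℕ, T (iσ i) = iσ (i + 1))
    (ι : ∀ (k l : ℕ), k ≤ l → (BraidGroup (k + 2) →* BraidGroup (l + 2)))
    (hι : ∀ (k l : ℕ) (h : k ≤ l) (j : Fin (k + 1)),
      ι k l h (bσ j) = bσ (Fin.castLE (Nat.le_pred_of_lt (Nat.succ_lt_succ (Nat.lt_succ_of_le h))) j : Fin (l + 2 - 1)))
    (f : ∀ k : ℕ, BraidGroup (k + 2) →* BInf)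
    (hf : ∀ (k : ℕ) (j : Fin (k + 1)), f k (bσ j) = iσ (j : ℕ))

include hT hι hf in
lemma back (u v : BInf) (h : Relation.EqvGen (equivMove T) u v) :
    ∀ x y : BB, f x.1 x.2 = u → f y.1 y.2 = v →
      Relation.EqvGen (approxMove ι) x y := by
  induction h with
  | rel u v huv =>
    intro x y hx hy
    rcases huv with ⟨a, hu⟩ | hv | hv
    · obtain ⟨m, cm, hcm⟩ := f_surj ι hι f hf a
      have hley : y.1 ≤ max x.1 (max y.1 m) := by omega
      have hlex : x.1 ≤ max x.1 (max y.1 m) := by omega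
      have hlem : m ≤ max x.1 (max y.1 m) := by omega
      set l := max x.1 (max y.1 m) with hl
      have h1 : f x.1 x.2 =
          f l (ι m l hlem cm * ι y.1 l hley y.2 * (ι m l hlem cm)⁻¹) := by
        rw [map_mul, map_mul, map_inv, f_ι ι hι f hf, f_ι ι hι f hf, hcm, hy, hx, hu]
      refine Relation.EqvGen.trans _
        (⟨l, ι m l hlem cm * ι y.1 l hley y.2 * (ι m l hlem cm)⁻¹⟩ : BB) _
        (afeq ι hι f hf x _ h1) ?_
      refine Relation.EqvGen.trans _ (⟨l, ι y.1 l hley y.2⟩ : BB) _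
        (Relation.EqvGen.symm _ _ (aconj ι l (ι m l hlem cm) (ι y.1 l hley y.2))) ?_
      exact Relation.EqvGen.symm _ _ (aincl ι y l hley)
    · have h1 : f y.1 y.2 =
          f (x.1+1) ((bσ (⟨0, by omega⟩ : Fin (x.1+3-1)) * shMap x.1 x.2 :
            BraidGroup (x.1+3))) := by
        rw [hy, hv, ← hx, iσT T hT f hf]
      refine Relation.EqvGen.symm _ _ ?_
      exact Relation.EqvGen.trans _
        (⟨x.1+1, (bσ (⟨0, by omega⟩ : Fin (x.1+3-1)) * shMap x.1 x.2 :
          BraidGroup (x.1+3))⟩ : BB) _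
        (afeq ι hι f hf y _ h1) (back_stab_pos ι hι f hf x.1 x.2)
    · have h1 : f y.1 y.2 =
          f (x.1+1) (((bσ (⟨0, by omega⟩ : Fin (x.1+3-1)))⁻¹ * shMap x.1 x.2 :
            BraidGroup (x.1+3))) := by
        rw [hy, hv, ← hx, iσTn T hT f hf]
      refine Relation.EqvGen.symm _ _ ?_
      exact Relation.EqvGen.trans _
        (⟨x.1+1, ((bσ (⟨0, by omega⟩ : Fin (x.1+3-1)))⁻¹ * shMap x.1 x.2 :
          BraidGroup (x.1+3))⟩ : BB) _
        (afeq ι hι f hf y _ h1) (back_stab_neg ι hι f hf x.1 x.2)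
  | refl u =>
    intro x y hx hy
    exact afeq ι hι f hf x y (hx.trans hy.symm)
  | symm u v _ ih =>
    intro x y hx hy
    exact Relation.EqvGen.symm _ _ (ih y x hy hx)
  | trans u v w _ _ ih1 ih2 =>
    intro x y hx hy
    obtain ⟨m, cm, hcm⟩ := f_surj ι hι f hf v
    exact Relation.EqvGen.trans _ (⟨m, cm⟩ : BB) _
      (ih1 x ⟨m, cm⟩ hx hcm) (ih2 ⟨m, cm⟩ y hcm hy)

include hT hι hf in
lemma forward (x y : BB) (h : Relation.EqvGen (approxMove ι) x y) :
    Relation.EqvGen (equivMove T) (f x.1 x.2) (f y.1 y.2) := by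
  induction h with
  | rel a b hab =>
    rcases hab with ⟨c, hb⟩ | hb | hb | ⟨hle, hb⟩
    · subst hb
      show Relation.EqvGen (equivMove T) (f a.1 a.2) (f a.1 (c * a.2 * c⁻¹))
      have he : f a.1 (c * a.2 * c⁻¹) = f a.1 c * f a.1 a.2 * (f a.1 c)⁻¹ := by
        rw [map_mul, map_mul, map_inv]
      rw [he]
      exact econj' T (f a.1 c) (f a.1 a.2)
    · subst hb
      exact stab_equiv_pos T hT ι hι f hf a.1 a.2
    · subst hb
      exact stab_equiv_neg T hT ι hι f hf a.1 a.2
    · rw [hb, f_ι ι hι f hf]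
      exact Relation.EqvGen.refl _
  | refl a => exact Relation.EqvGen.refl _
  | symm a b _ ih => exact Relation.EqvGen.symm _ _ ih
  | trans a b c _ _ ih1 ih2 => exact Relation.EqvGen.trans _ _ _ ih1 ih2

end Final

end BraidAux


/-- For all `x, y ∈ 𝓑`, `x ≈ y` if and only if `f x ≡ f y`, where
`f (b, m) = f_m b` for the natural homomorphisms `f_m : B_m → B_∞`. -/
theorem approx_iff_equiv (T : BInf →* BInf)
    (hT : ∀ i : ℕ, T (iσ i) = iσ (i + 1))
    (ι : ∀ (k l : ℕ), k ≤ l → (BraidGroup (k + 2) →* BraidGroup (l + 2)))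
    (hι : ∀ (k l : ℕ) (h : k ≤ l) (j : Fin (k + 1)),
      ι k l h (bσ j) = bσ (Fin.castLE (by omega) j : Fin (l + 2 - 1)))
    (f : ∀ k : ℕ, BraidGroup (k + 2) →* BInf)
    (hf : ∀ (k : ℕ) (j : Fin (k + 1)), f k (bσ j) = iσ (j : ℕ)) :
    ∀ x y : BB,
      Relation.EqvGen (approxMove ι) x y ↔
        Relation.EqvGen (equivMove T) (f x.1 x.2) (f y.1 y.2) := by
  intro x y
  constructor
  · exact BraidAux.forward T hT ι hι f hf x y
  · intro h
    exact BraidAux.back T hT ι hι f hf _ _ h x y rfl rfl
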